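/- Let w be a continuous path of bounded variation in ℝ^d on [0,1] and define its level-k iterated integrals w^k_{s,t} = ∫_{s<t₁<⋯<t_k<t} dw_{t₁} ⊗ ⋯ ⊗ dw_{t_k}. Then Chen's identity holds: for all 0 ≤ s ≤ u ≤ t ≤ 1 and all n, the truncated signature 𝐰_{s,t} = (1, w¹_{s,t}, …, wⁿ_{s,t}) satisfies 𝐰_{s,u} ⊗ 𝐰_{s,u}' = 𝐰_{s,t}, i.e., w^k_{s,t} = ∑_{j=0}^k w^j_{s,u} ⊗ w^{k−j}_{u,t} for each 1 ≤ k ≤ n (with w⁰ = 1). -/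

import Mathlib

open MeasureTheory

/-- The coordinates of the level-`k` iterated integral
`w^k_{s,t} = ∫_{s<t₁<⋯<t_k<t} dw_{t₁} ⊗ ⋯ ⊗ dw_{t_k}` of a smooth path
`w : ℝ → ℝ^d`: the coordinate of `w^k_{s,t}` at a multi-index
`idx : Fin k → Fin d` is defined recursively by
`w^{k+1}_{s,t}(idx) = ∫_s^t w^k_{s,u}(idx|_{first k}) dw^{idx(k+1)}_u`. -/
noncomputable def sigCoord {d : ℕ} (w : ℝ → Fin d → ℝ) :
    (k : ℕ) → ℝ → ℝ → (Fin k → Fin d) → ℝ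
  | 0, _, _, _ => 1
  | (k + 1), s, t, idx =>
      ∫ u in s..t, sigCoord w k s u (fun a => idx a.castSucc) *
        deriv (fun r => w r (idx (Fin.last k))) u

lemma sigCoord_cast {d : ℕ} (w : ℝ → Fin d → ℝ) {k k' : ℕ} (h : k = k') (s t : ℝ)
    (idx : ℕ → Fin d) :
    sigCoord w k s t (fun a => idx a) = sigCoord w k' s t (fun a => idx a) := by
  subst h; rfl

lemma deriv_cont {d : ℕ} {w : ℝ → Fin d → ℝ} (hw : ContDiff ℝ 1 w) (i : Fin d) :
    Continuous (deriv (fun r => w r i)) :=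
  (contDiff_pi.mp hw i).continuous_deriv le_rfl

lemma sigCoord_continuous {d : ℕ} (w : ℝ → Fin d → ℝ) (hw : ContDiff ℝ 1 w)
    (k : ℕ) (s : ℝ) (idx : Fin k → Fin d) :
    Continuous (fun t => sigCoord w k s t idx) := by
  induction k with
  | zero => exact continuous_const
  | succ k ih =>
      show Continuous fun t => ∫ r in s..t,
        sigCoord w k s r (fun a => idx a.castSucc) *
          deriv (fun r' => w r' (idx (Fin.last k))) r
      exact intervalIntegral.continuous_primitive
        (fun a b => (((ih _).mul (deriv_cont hw _)).intervalIntegrable a b)) s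

lemma chen_aux {d : ℕ} (w : ℝ → Fin d → ℝ) (hw : ContDiff ℝ 1 w) (s u : ℝ)
    (hsu : s ≤ u) :
    ∀ k : ℕ, ∀ t : ℝ, u ≤ t → ∀ idx : ℕ → Fin d,
      sigCoord w k s t (fun a => idx a)
        = ∑ j ∈ Finset.range (k + 1),
            sigCoord w j s u (fun a => idx a) *
              sigCoord w (k - j) u t (fun a => idx (j + (a : ℕ))) := by
  intro k
  induction k with
  | zero =>
      intro t ht idx
      simp [sigCoord]
  | succ k ih =>
      intro t ht idx
      have hD := deriv_cont hw (idx k)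
      set D : ℝ → ℝ := deriv (fun r => w r (idx k)) with hDdef
      have hcont : ∀ (m : ℕ) (s' : ℝ) (j : Fin m → Fin d),
          Continuous fun r => sigCoord w m s' r j := fun m s' j =>
        sigCoord_continuous w hw m s' j
      have hLHS : sigCoord w (k + 1) s t (fun a => idx a)
          = ∫ r in s..t, sigCoord w k s r (fun a => idx a) * D r := by
        show (∫ r in s..t, sigCoord w k s r (fun a => idx (a.castSucc : ℕ)) *
          deriv (fun r' => w r' (idx (Fin.last k : ℕ))) r) = _
        simp only [Fin.coe_castSucc, Fin.val_last, hDdef]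
      have hint1 : IntervalIntegrable (fun r => sigCoord w k s r (fun a => idx a) * D r)
          volume s u := ((hcont k s _).mul hD).intervalIntegrable s u
      have hint2 : IntervalIntegrable (fun r => sigCoord w k s r (fun a => idx a) * D r)
          volume u t := ((hcont k s _).mul hD).intervalIntegrable u t
      rw [hLHS, ← intervalIntegral.integral_add_adjacent_intervals hint1 hint2]
      have hpiece1 : (∫ r in s..u, sigCoord w k s r (fun a => idx a) * D r)
          = sigCoord w (k + 1) s u (fun a => idx a) := by
        show _ = ∫ r in s..u, sigCoord w k s r (fun a => idx (a.castSucc : ℕ)) *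
          deriv (fun r' => w r' (idx (Fin.last k : ℕ))) r
        simp only [Fin.coe_castSucc, Fin.val_last, hDdef]
      have hpiece2 : (∫ r in u..t, sigCoord w k s r (fun a => idx a) * D r)
          = ∑ j ∈ Finset.range (k + 1),
              sigCoord w j s u (fun a => idx a) *
                sigCoord w (k - j + 1) u t (fun a => idx (j + (a : ℕ))) := by
        have hcg : (∫ r in u..t, sigCoord w k s r (fun a => idx a) * D r)
            = ∫ r in u..t, ∑ j ∈ Finset.range (k + 1),
                sigCoord w j s u (fun a => idx a) *
                  (sigCoord w (k - j) u r (fun a => idx (j + (a : ℕ))) * D r) := by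
          apply intervalIntegral.integral_congr
          intro r hr
          rw [Set.uIcc_of_le ht] at hr
          beta_reduce
          rw [ih r hr.1 idx, Finset.sum_mul]
          exact Finset.sum_congr rfl fun j _ => by ring
        rw [hcg, intervalIntegral.integral_finset_sum (f := fun j r =>
            sigCoord w j s u (fun a => idx a) *
              (sigCoord w (k - j) u r (fun a => idx (j + (a : ℕ))) * D r)) (fun j _ =>
          ((continuous_const.mul ((hcont _ u _).mul hD)).intervalIntegrable u t))]
        refine Finset.sum_congr rfl fun j hj => ?_
        rw [intervalIntegral.integral_const_mul]
        congr 1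
        have hjk : j + (k - j) = k := by
          have := Finset.mem_range.mp hj; omega
        show _ = ∫ r in u..t, sigCoord w (k - j) u r
            (fun a => idx (j + ((a.castSucc : Fin (k-j+1)) : ℕ))) *
          deriv (fun r' => w r' (idx (j + ((Fin.last (k - j) : Fin (k-j+1)) : ℕ)))) r
        simp only [Fin.coe_castSucc, Fin.val_last, hjk, hDdef]
      rw [hpiece1, hpiece2]
      conv_rhs => rw [Finset.sum_range_succ]
      rw [Nat.sub_self,
        show sigCoord w 0 u t (fun a : Fin 0 => idx (k + 1 + (a : ℕ))) = 1 from rfl,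
        mul_one, add_comm]
      congr 1
      refine Finset.sum_congr rfl fun j hj => ?_
      congr 1
      have h1 : k + 1 - j = k - j + 1 := by
        have := Finset.mem_range.mp hj; omega
      exact (sigCoord_cast w h1 u t (fun a => idx (j + a))).symm

/-- Chen's identity for the truncated signature of a smooth path `w` on
`[0,1]`: for `0 ≤ s ≤ u ≤ t ≤ 1` and each level `k ≤ n`,
`w^k_{s,t} = ∑_{j=0}^k w^j_{s,u} ⊗ w^{k−j}_{u,t}` (coordinatewise). -/
theorem chen_identity {d n : ℕ} (w : ℝ → Fin d → ℝ) (hw : ContDiff ℝ 1 w)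
    (s u t : ℝ) (hs : 0 ≤ s) (hsu : s ≤ u) (hut : u ≤ t) (ht : t ≤ 1)
    (k : ℕ) (hk : k ≤ n) (idx : Fin k → Fin d) :
    sigCoord w k s t idx
      = ∑ j : Fin (k + 1),
          sigCoord w j s u (fun a => idx (Fin.castLE (Nat.lt_succ_iff.mp j.isLt) a)) *
          sigCoord w (k - j) u t
            (fun a => idx ⟨(j : ℕ) + (a : ℕ), by
              have h1 := a.isLt; have h2 := j.isLt; omega⟩) := by
  clear hk
  cases k with
  | zero => simp [sigCoord]
  | succ k' =>
    let idx' : ℕ → Fin d := fun m => if h : m < k' + 1 then idx ⟨m, h⟩ else idx 0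
    have h1 : (fun a : Fin (k' + 1) => idx' (a : ℕ)) = idx := by
      funext a
      simp only [idx', dif_pos a.isLt, Fin.eta]
    conv_lhs => rw [← h1]
    rw [chen_aux w hw s u hsu (k' + 1) t hut idx',
      ← Fin.sum_univ_eq_sum_range (fun m => sigCoord w m s u (fun a => idx' (a : ℕ)) *
        sigCoord w (k' + 1 - m) u t (fun a => idx' (m + (a : ℕ)))) (k' + 1 + 1)]
    refine Finset.sum_congr rfl fun j _ => ?_
    have hj : (j : ℕ) ≤ k' + 1 := Nat.lt_succ_iff.mp j.isLt
    have e1 : (fun a : Fin (j : ℕ) => idx' (a : ℕ))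
        = fun a : Fin (j : ℕ) => idx (Fin.castLE hj a) := by
      funext a
      have ha : (a : ℕ) < k' + 1 := lt_of_lt_of_le a.isLt hj
      simp only [idx', dif_pos ha]
      rfl
    have e2 : (fun a : Fin (k' + 1 - (j : ℕ)) => idx' ((j : ℕ) + (a : ℕ)))
        = fun a : Fin (k' + 1 - (j : ℕ)) => idx ⟨(j : ℕ) + (a : ℕ), by
            have := a.isLt; omega⟩ := by
      funext a
      have ha : (j : ℕ) + (a : ℕ) < k' + 1 := by have := a.isLt; omega
      simp only [idx', dif_pos ha]
    rw [e1, e2]
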